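/- A unit-area non-convex pentagon with two interior angles larger than π has perimeter greater than that of the unit-area equilateral triangle, 3·(4/√3)^{1/2} ≈ 4.559. -/

import Mathlib

open Finset

noncomputable section

abbrev Pt : Type := EuclideanSpace ℝ (Fin 2)

def cross2 (p q : Pt) : ℝ := p 0 * q 1 - p 1 * q 0

def perimeter {n : ℕ} [NeZero n] (v : Fin n → Pt) : ℝ :=
  ∑ i, dist (v i) (v (i + 1))

def shoelace {n : ℕ} [NeZero n] (v : Fin n → Pt) : ℝ :=
  (∑ i, (v i 0 * v (i + 1) 1 - v (i + 1) 0 * v i 1)) / 2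

def polyArea {n : ℕ} [NeZero n] (v : Fin n → Pt) : ℝ := |shoelace v|

def IsSimplePolygon {n : ℕ} [NeZero n] (v : Fin n → Pt) : Prop :=
  Function.Injective v ∧
  (∀ i : Fin n,
    segment ℝ (v i) (v (i + 1)) ∩ segment ℝ (v (i + 1)) (v (i + 1 + 1)) = {v (i + 1)}) ∧
  (∀ i j : Fin n, j ≠ i → j ≠ i + 1 → j + 1 ≠ i →
    segment ℝ (v i) (v (i + 1)) ∩ segment ℝ (v j) (v (j + 1)) = ∅)

/-- A simple, positively (counterclockwise) oriented polygon. -/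
def IsPolygon {n : ℕ} [NeZero n] (v : Fin n → Pt) : Prop :=
  IsSimplePolygon v ∧ 0 < shoelace v

/-- Interior angle at vertex `i` of a positively oriented simple polygon:
the unoriented angle at a convex (left-turn) vertex, and its reflex complement
at a right-turn vertex. -/
def interiorAngle {n : ℕ} [NeZero n] (v : Fin n → Pt) (i : Fin n) : ℝ :=
  if 0 ≤ cross2 (v i - v (i - 1)) (v (i + 1) - v i) then
    EuclideanGeometry.angle (v (i - 1)) (v i) (v (i + 1))
  else 2 * Real.pi - EuclideanGeometry.angle (v (i - 1)) (v i) (v (i + 1))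

def IsConvexPolygon {n : ℕ} [NeZero n] (v : Fin n → Pt) : Prop :=
  IsPolygon v ∧ ∀ i, interiorAngle v i ≤ Real.pi

/-- The polygon is circumscribed about a circle: every edge is tangent to a
common circle of radius `r` centered at `c`. -/
def IsCircumscribed {n : ℕ} [NeZero n] (v : Fin n → Pt) : Prop :=
  ∃ c : Pt, ∃ r : ℝ, 0 < r ∧
    ∀ i : Fin n, Metric.infDist c (segment ℝ (v i) (v (i + 1))) = r

/-- The polygon is inscribed in a circle: all vertices lie on a common circle. -/
def IsInscribed {n : ℕ} [NeZero n] (v : Fin n → Pt) : Prop :=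
  ∃ c : Pt, ∃ r : ℝ, ∀ i : Fin n, dist c (v i) = r

def longestEdge {n : ℕ} [NeZero n] (v : Fin n → Pt) : ℝ :=
  Finset.univ.sup' Finset.univ_nonempty (fun i => dist (v i) (v (i + 1)))

/-! ### Auxiliary machinery -/

/-- Signed area of a triangle. -/
def S3 (a b c : Pt) : ℝ :=
  (a 0 * (b 1 - c 1) + b 0 * (c 1 - a 1) + c 0 * (a 1 - b 1)) / 2

/-- Signed area (shoelace) of a pentagon given by five points. -/
def S5 (a b c d e : Pt) : ℝ :=
  (a 0 * b 1 - b 0 * a 1 + b 0 * c 1 - c 0 * b 1 + c 0 * d 1 - d 0 * c 1 +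
    d 0 * e 1 - e 0 * d 1 + e 0 * a 1 - a 0 * e 1) / 2

lemma cross2_eq_S3 (a b c : Pt) : cross2 (b - a) (c - b) = 2 * S3 a b c := by
  simp only [cross2, S3, PiLp.sub_apply]
  ring

lemma dist_sq (x y : Pt) : dist x y ^ 2 = (x 0 - y 0) ^ 2 + (x 1 - y 1) ^ 2 := by
  rw [EuclideanSpace.dist_eq, Real.sq_sqrt (by positivity)]
  simp [Fin.sum_univ_two, Real.dist_eq, sq_abs]

lemma amgm3 (u v w : ℝ) (hu : 0 ≤ u) (hv : 0 ≤ v) (hw : 0 ≤ w) :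
    27 * (u * (v * w)) ≤ (u + v + w) ^ 3 := by
  nlinarith [mul_nonneg hu (sq_nonneg (v-w)), mul_nonneg hv (sq_nonneg (w-u)),
    mul_nonneg hw (sq_nonneg (u-v)),
    mul_nonneg (add_nonneg (add_nonneg hu hv) hw) (sq_nonneg (u-v)),
    mul_nonneg (add_nonneg (add_nonneg hu hv) hw) (sq_nonneg (v-w)),
    mul_nonneg (add_nonneg (add_nonneg hu hv) hw) (sq_nonneg (w-u))]

lemma key_ineq (p q r S : ℝ) (hp0 : 0 ≤ p) (hq0 : 0 ≤ q) (hr0 : 0 ≤ r)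
    (htp : p ≤ q + r) (htq : q ≤ p + r) (htr : r ≤ p + q) (hS : 1 < S)
    (heron : 16 * S ^ 2 = (p+q+r) * ((q+r-p) * ((p-q+r) * (p+q-r)))) :
    Real.sqrt (12 * Real.sqrt 3) < p + q + r := by
  have hP0 : (0:ℝ) ≤ p + q + r := by linarith
  have hamgm := amgm3 (q+r-p) (p-q+r) (p+q-r) (by linarith) (by linarith) (by linarith)
  have he : q+r-p + (p-q+r) + (p+q-r) = p + q + r := by ring
  rw [he] at hamgm
  have hS2 : 1 < S ^ 2 := by nlinarith
  have h432 : 432 < (p+q+r)^4 := by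
    nlinarith [mul_le_mul_of_nonneg_left hamgm hP0]
  have hs3 : (0:ℝ) < Real.sqrt 3 := by positivity
  have h12 : (12 * Real.sqrt 3)^2 = 432 := by
    rw [mul_pow, Real.sq_sqrt] <;> norm_num
  have hP2 : 12 * Real.sqrt 3 < (p+q+r) ^ 2 := by
    nlinarith [sq_nonneg ((p+q+r)^2 - 12*Real.sqrt 3), sq_nonneg ((p+q+r)^2 + 12*Real.sqrt 3)]
  calc Real.sqrt (12 * Real.sqrt 3) < Real.sqrt ((p+q+r)^2) := Real.sqrt_lt_sqrt (by positivity) hP2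
    _ = p + q + r := Real.sqrt_sq hP0

/-- A triangle with signed area greater than 1 has perimeter exceeding that of the
unit-area equilateral triangle. -/
lemma tri_perim (x y z : Pt) (h : 1 < S3 x y z) :
    3 * Real.sqrt (4 / Real.sqrt 3) < dist x y + dist y z + dist z x := by
  have htp : dist x y ≤ dist y z + dist z x := by
    have := dist_triangle x z y
    rw [dist_comm x z, dist_comm z y] at this
    linarith
  have htq : dist y z ≤ dist x y + dist z x := by
    have := dist_triangle y x z
    rw [dist_comm y x, dist_comm x z] at this
    linarith
  have htr : dist z x ≤ dist x y + dist y z := by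
    have := dist_triangle z y x
    rw [dist_comm z y, dist_comm y x] at this
    linarith
  have heron : 16 * S3 x y z ^ 2 =
      (dist x y + dist y z + dist z x) *
        ((dist y z + dist z x - dist x y) *
          ((dist x y - dist y z + dist z x) * (dist x y + dist y z - dist z x))) := by
    have e : ∀ p q r : ℝ, (p+q+r)*((q+r-p)*((p-q+r)*(p+q-r))) =
        2*(p^2)*(q^2)+2*(q^2)*(r^2)+2*(r^2)*(p^2)-(p^2)^2-(q^2)^2-(r^2)^2 := by
      intro p q r; ring
    rw [e, dist_sq, dist_sq, dist_sq]
    simp only [S3]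
    ring
  have hk := key_ineq (dist x y) (dist y z) (dist z x) (S3 x y z)
    dist_nonneg dist_nonneg dist_nonneg htp htq htr h heron
  have hgoal : 3 * Real.sqrt (4 / Real.sqrt 3) = Real.sqrt (12 * Real.sqrt 3) := by
    have hs3 : (0:ℝ) < Real.sqrt 3 := by positivity
    have h9 : (12 * Real.sqrt 3) = 9 * (4 / Real.sqrt 3) := by
      field_simp
      nlinarith [Real.sq_sqrt (show (0:ℝ) ≤ 3 by norm_num)]
    rw [h9, Real.sqrt_mul (by norm_num), show (9:ℝ) = 3^2 by norm_num, Real.sqrt_sq (by norm_num)]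
  linarith [hgoal ▸ hk]

/-- Two properly crossing segments intersect. -/
lemma seg_inter (a b c d : Pt) (h1 : S3 a b c < 0) (h2 : 0 < S3 a b d)
    (h3 : 0 < S3 a c d) (h4 : S3 b c d < 0) :
    (segment ℝ a b ∩ segment ℝ c d).Nonempty := by
  have hE : S3 a c d - S3 b c d = S3 a b d - S3 a b c := by
    simp only [S3]; ring
  set A := S3 a c d with hA
  set B := S3 b c d with hB
  set C := S3 a b c with hC
  set D := S3 a b d with hD
  have hAB : 0 < A - B := by linarith
  set t := A / (A - B) with ht
  have ht0 : 0 ≤ t := by positivity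
  have ht1 : t ≤ 1 := by
    rw [ht, div_le_one hAB]; linarith
  set s := (-C) / (A - B) with hs
  have hs0 : 0 ≤ s := by
    apply div_nonneg (by linarith) (by linarith)
  have hs1 : s ≤ 1 := by
    rw [hs, div_le_one hAB]; linarith
  refine ⟨(1 - t) • a + t • b, ⟨1 - t, t, by linarith, ht0, by ring, rfl⟩,
    ⟨1 - s, s, by linarith, hs0, by ring, ?_⟩⟩
  have key : ∀ k : Fin 2, A * b k - B * a k - D * c k + C * d k = 0 := by
    intro k
    fin_cases k
    · simp only [Fin.zero_eta, Fin.isValue, hA, hB, hC, hD, S3]; ring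
    · simp only [Fin.mk_one, Fin.isValue, hA, hB, hC, hD, S3]; ring
  ext k
  have hk := key k
  simp only [PiLp.add_apply, PiLp.smul_apply, smul_eq_mul]
  have e1 : (A - B) * s = -C := by rw [hs]; field_simp
  have e2 : (A - B) * t = A := by rw [ht]; field_simp
  apply mul_left_cancel₀ (ne_of_gt hAB)
  linear_combination (d k - c k) * e1 + (a k - b k) * e2 + c k * hE - hk

/-- The separated case: reflex vertices at `b` and `d`. -/
lemma sep_case (a b c d e : Pt) (hb : cross2 (b - a) (c - b) < 0)
    (hd : cross2 (d - c) (e - d) < 0) (hS : S5 a b c d e = 1) :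
    3 * Real.sqrt (4 / Real.sqrt 3) <
      dist a b + dist b c + dist c d + dist d e + dist e a := by
  rw [cross2_eq_S3] at hb hd
  have hsplit : S5 a b c d e = S3 a b c + S3 c d e + S3 a c e := by
    simp only [S5, S3]; ring
  have hace : 1 < S3 a c e := by
    rw [hsplit] at hS; linarith
  have htri := tri_perim a c e hace
  have t1 : dist a c ≤ dist a b + dist b c := dist_triangle a b c
  have t2 : dist c e ≤ dist c d + dist d e := dist_triangle c d e
  linarith

/-- The adjacent case: reflex vertices at `b` and `c`, with the edges `ab` and `cd`
disjoint (from simplicity). -/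
lemma adj_case (a b c d e : Pt) (hb : cross2 (b - a) (c - b) < 0)
    (hc : cross2 (c - b) (d - c) < 0)
    (hdisj : segment ℝ a b ∩ segment ℝ c d = ∅) (hS : S5 a b c d e = 1) :
    3 * Real.sqrt (4 / Real.sqrt 3) <
      dist a b + dist b c + dist c d + dist d e + dist e a := by
  rw [cross2_eq_S3] at hb hc
  have habc : S3 a b c < 0 := by linarith
  have hbcd : S3 b c d < 0 := by linarith
  have hq : S3 a b c + S3 a c d < 0 := by
    by_contra hcon
    push_neg at hcon
    have h3 : 0 < S3 a c d := by linarith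
    have hDid : S3 a b d = S3 a b c + S3 a c d - S3 b c d := by
      simp only [S3]; ring
    have h2 : 0 < S3 a b d := by rw [hDid]; linarith
    obtain ⟨p, hp⟩ := seg_inter a b c d habc h2 h3 hbcd
    rw [hdisj] at hp
    exact hp
  have hsplit : S5 a b c d e = S3 a b c + S3 a c d + S3 a d e := by
    simp only [S5, S3]; ring
  have hade : 1 < S3 a d e := by
    rw [hsplit] at hS; linarith
  have htri := tri_perim a d e hade
  have t1 : dist a d ≤ dist a b + dist b c + dist c d :=
    calc dist a d ≤ dist a c + dist c d := dist_triangle a c d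
      _ ≤ dist a b + dist b c + dist c d := by linarith [dist_triangle a b c]
  linarith

lemma reflex_cross (v : Fin 5 → Pt) (k : Fin 5) (h : Real.pi < interiorAngle v k) :
    cross2 (v k - v (k - 1)) (v (k + 1) - v k) < 0 := by
  by_contra hcon
  push_neg at hcon
  rw [interiorAngle, if_pos hcon] at h
  exact absurd h (not_lt.2 (EuclideanGeometry.angle_le_pi _ _ _))

lemma shoelace_rot (v : Fin 5 → Pt) (c : Fin 5) :
    shoelace v = S5 (v c) (v (c+1)) (v (c+2)) (v (c+3)) (v (c+4)) := by
  unfold shoelace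
  rw [← Equiv.sum_comp (Equiv.addLeft c) (fun i => v i 0 * v (i+1) 1 - v (i+1) 0 * v i 1)]
  simp only [Equiv.coe_addLeft, Function.comp]
  rw [Fin.sum_univ_five]
  have e0 : ∀ x : Fin 5, x + 0 = x := fun x => add_zero x
  have e1 : ∀ x : Fin 5, x + 1 + 1 = x + 2 := by decide
  have e2 : ∀ x : Fin 5, x + 2 + 1 = x + 3 := by decide
  have e3 : ∀ x : Fin 5, x + 3 + 1 = x + 4 := by decide
  have e4 : ∀ x : Fin 5, x + 4 + 1 = x := by decide
  rw [e0, e1, e2, e3, e4]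
  simp only [S5]
  ring

lemma perimeter_rot (v : Fin 5 → Pt) (c : Fin 5) :
    perimeter v = dist (v c) (v (c+1)) + dist (v (c+1)) (v (c+2)) +
      dist (v (c+2)) (v (c+3)) + dist (v (c+3)) (v (c+4)) + dist (v (c+4)) (v c) := by
  unfold perimeter
  rw [← Equiv.sum_comp (Equiv.addLeft c) (fun i => dist (v i) (v (i+1)))]
  simp only [Equiv.coe_addLeft, Function.comp]
  rw [Fin.sum_univ_five]
  have e0 : ∀ x : Fin 5, x + 0 = x := fun x => add_zero x
  have e1 : ∀ x : Fin 5, x + 1 + 1 = x + 2 := by decide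
  have e2 : ∀ x : Fin 5, x + 2 + 1 = x + 3 := by decide
  have e3 : ∀ x : Fin 5, x + 3 + 1 = x + 4 := by decide
  have e4 : ∀ x : Fin 5, x + 4 + 1 = x := by decide
  rw [e0, e1, e2, e3, e4]

theorem stmt3 (v : Fin 5 → Pt) (hP : IsPolygon v) (harea : polyArea v = 1)
    (i j : Fin 5) (hij : i ≠ j)
    (hi : Real.pi < interiorAngle v i) (hj : Real.pi < interiorAngle v j) :
    3 * Real.sqrt (4 / Real.sqrt 3) < perimeter v := by
  obtain ⟨hsimple, hpos⟩ := hP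
  have hsh : shoelace v = 1 := by
    rw [polyArea, abs_of_pos hpos] at harea; exact harea
  have hdisj := hsimple.2.2
  have hci := reflex_cross v i hi
  have hcj := reflex_cross v j hj
  have g1 : ∀ x : Fin 5, x - 1 + 1 = x := by decide
  have g2 : ∀ x : Fin 5, x - 1 + 2 = x + 1 := by decide
  have g3 : ∀ x : Fin 5, x - 1 + 3 = x + 2 := by decide
  have g4 : ∀ x : Fin 5, x - 1 + 4 = x + 3 := by decide
  have g5 : ∀ x : Fin 5, x + 1 - 1 = x := by decide
  have g6 : ∀ x : Fin 5, x + 1 + 1 = x + 2 := by decide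
  have g7 : ∀ x : Fin 5, x + 1 ≠ x - 1 := by decide
  have g8 : ∀ x : Fin 5, x + 1 ≠ x := by decide
  have g9 : ∀ x : Fin 5, x + 2 ≠ x - 1 := by decide
  have g10 : ∀ x : Fin 5, x + 2 - 1 = x + 1 := by decide
  have g11 : ∀ x : Fin 5, x + 2 + 1 = x + 3 := by decide
  have g12 : ∀ x : Fin 5, x + 2 + 2 = x + 4 := by decide
  have g13 : ∀ x : Fin 5, x + 2 + 3 = x := by decide
  have g14 : ∀ x : Fin 5, x + 2 + 4 = x + 1 := by decide
  have g15 : ∀ x : Fin 5, x + 3 - 1 = x + 2 := by decide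
  have g16 : ∀ x : Fin 5, x + 3 + 1 = x + 4 := by decide
  have g17 : ∀ x : Fin 5, x + 3 + 2 = x := by decide
  have g18 : ∀ x : Fin 5, x + 3 + 3 = x + 1 := by decide
  have g19 : ∀ x : Fin 5, x + 3 + 4 = x + 2 := by decide
  have g20 : ∀ x : Fin 5, x - 1 = x + 4 := by decide
  have g21 : ∀ x : Fin 5, x + 4 - 1 = x + 3 := by decide
  have g22 : ∀ x : Fin 5, x + 4 + 1 = x := by decide
  have g23 : ∀ x : Fin 5, x ≠ x + 3 := by decide
  have g24 : ∀ x : Fin 5, x ≠ x + 4 := by decide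
  have g25 : ∀ x : Fin 5, x + 1 ≠ x + 3 := by decide
  have hcase : j = i + 1 ∨ j = i + 2 ∨ j = i + 3 ∨ j = i + 4 := by
    have h5 : ∀ a b : Fin 5, a ≠ b → (b = a + 1 ∨ b = a + 2 ∨ b = a + 3 ∨ b = a + 4) := by decide
    exact h5 i j hij
  have hS5 := shoelace_rot v (i - 1)
  rw [g1, g2, g3, g4, hsh] at hS5
  rcases hcase with h | h | h | h
  · -- adjacent, reflex at i and i+1
    subst h
    rw [g5, g6] at hcj
    have hd := hdisj (i - 1) (i + 1) (g7 i) (by rw [g1]; exact g8 i) (by rw [g6]; exact g9 i)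
    rw [g1, g6] at hd
    have := adj_case (v (i-1)) (v i) (v (i+1)) (v (i+2)) (v (i+3)) hci hcj hd hS5.symm
    rw [perimeter_rot v (i - 1), g1, g2, g3, g4]
    linarith
  · -- separated, reflex at i and i+2
    subst h
    rw [g10, g11] at hcj
    have := sep_case (v (i-1)) (v i) (v (i+1)) (v (i+2)) (v (i+3)) hci hcj hS5.symm
    rw [perimeter_rot v (i - 1), g1, g2, g3, g4]
    linarith
  · -- separated, reflex at i+3 and i (= (i+3)+2)
    subst h
    have hS5' := shoelace_rot v (i + 2)
    rw [g11, g12, g13, g14, hsh] at hS5'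
    rw [g15, g16] at hcj
    rw [g20] at hci
    have := sep_case (v (i+2)) (v (i+3)) (v (i+4)) (v i) (v (i+1)) hcj hci hS5'.symm
    rw [perimeter_rot v (i + 2), g11, g12, g13, g14]
    linarith
  · -- adjacent, reflex at i+4 and i
    subst h
    have hS5' := shoelace_rot v (i + 3)
    rw [g16, g17, g18, g19, hsh] at hS5'
    rw [g21, g22] at hcj
    rw [g20] at hci
    have hd := hdisj (i + 3) i (g23 i) (by rw [g16]; exact (g24 i)) (g25 i)
    rw [g16] at hd
    have := adj_case (v (i+3)) (v (i+4)) (v i) (v (i+1)) (v (i+2)) hcj hci hd hS5'.symm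
    rw [perimeter_rot v (i + 3), g16, g17, g18, g19]
    linarith

end
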